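/- Let G be a graph and suppose there exists T ⊆ V(G) with T ∩ X = ∅ for some even set X such that, taking g(v) = −1 for v ∈ X and g(v) = 2 otherwise, and f(v) ≥ deg_G(v) for all v, the quantity −g(T) + (sum over x∈T of deg_G(x)) − c(G−T) ≤ −2 holds with T meeting no vertex of X. Then G contains no spanning subgraph F with d_F(v) odd for v ∈ X, d_F(v) even for v ∉ X, and d_F(v) ≥ 1 for all v. Equivalently: if there is T ⊆ V(G) with (sum over x∈T of deg_G(x)) − 2|T| − c(G−T) ≤ −2, then G does not have the strong parity property. -/

import Mathlib

open scoped Classical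

def StrongParityProperty {V : Type*} [Fintype V] (G : SimpleGraph V) : Prop :=
  ∀ X : Finset V, Even X.card →
    ∃ F : SimpleGraph V, F ≤ G ∧ (∀ v : V, 1 ≤ F.degree v) ∧
      (∀ v ∈ X, Odd (F.degree v)) ∧ (∀ v ∉ X, Even (F.degree v))

noncomputable def numComponents {V : Type*} [Fintype V] (G : SimpleGraph V) (T : Finset V) : ℕ :=
  Nat.card (G.induce ((↑T : Set V)ᶜ)).ConnectedComponent

section Aux

variable {V : Type*} [Fintype V]

lemma aux_even_sum_inter (H : SimpleGraph V) (S : Finset V) :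
    Even (∑ v ∈ S, (H.neighborFinset v ∩ S).card) := by
  classical
  let H' : SimpleGraph V :=
    { Adj := fun a b => H.Adj a b ∧ a ∈ S ∧ b ∈ S
      symm := ⟨fun a b hab => ⟨hab.1.symm, hab.2.2, hab.2.1⟩⟩
      loopless := ⟨fun a ha => H.loopless.irrefl a ha.1⟩ }
  have hnb : ∀ v, H'.neighborFinset v
      = if v ∈ S then H.neighborFinset v ∩ S else ∅ := by
    intro v; ext w
    by_cases hv : v ∈ S <;>
      simp [H', SimpleGraph.mem_neighborFinset, hv, and_assoc, and_comm]
  have hdeg' : ∀ v, H'.degree v = if v ∈ S then (H.neighborFinset v ∩ S).card else 0 := by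
    intro v
    rw [← SimpleGraph.card_neighborFinset_eq_degree, hnb]
    split <;> simp
  have hsum : ∑ v ∈ S, (H.neighborFinset v ∩ S).card = ∑ v, H'.degree v := by
    calc ∑ v ∈ S, (H.neighborFinset v ∩ S).card = ∑ v ∈ S, H'.degree v :=
          Finset.sum_congr rfl (fun v hv => by rw [hdeg', if_pos hv])
      _ = ∑ v, H'.degree v := by
          apply Finset.sum_subset (Finset.subset_univ S)
          intro v _ hv
          rw [hdeg', if_neg hv]
  rw [hsum, SimpleGraph.sum_degrees_eq_twice_card_edges]
  exact even_two_mul _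

lemma aux_even_sum_iff {f : V → ℕ} {s : Finset V}
    (h : ∀ v ∈ s, Odd (f v)) : (Even (∑ v ∈ s, f v) ↔ Even s.card) := by
  classical
  induction s using Finset.cons_induction with
  | empty => simp
  | cons a t ha ih =>
      rw [Finset.sum_cons, Finset.card_cons]
      have h1 : ¬ Even (f a) := Nat.not_even_iff_odd.mpr (h a (by simp))
      have h2 := ih (fun v hv => h v (by simp [hv]))
      rw [Nat.even_add, Nat.even_add_one]
      tauto

lemma aux_sum_inter_comm (H : SimpleGraph V) (A B : Finset V) :
    ∑ v ∈ A, (H.neighborFinset v ∩ B).card = ∑ u ∈ B, (H.neighborFinset u ∩ A).card := by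
  classical
  have key : ∀ (C D : Finset V) (v : V),
      (H.neighborFinset v ∩ D).card = ∑ u ∈ D, if H.Adj v u then 1 else 0 := by
    intro C D v
    rw [← Finset.card_filter]
    congr 1
    ext w
    simp [SimpleGraph.mem_neighborFinset, and_comm]
  simp only [key A B, key B A]
  rw [Finset.sum_comm]
  apply Finset.sum_congr rfl
  intro u _
  apply Finset.sum_congr rfl
  intro v _
  simp [SimpleGraph.adj_comm]

end Aux

set_option maxHeartbeats 2000000 in
theorem deficiency_implies_no_strong_parity {V : Type*} [Fintype V] (G : SimpleGraph V)
    (T : Finset V)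
    (hT : (∑ x ∈ T, (G.degree x : ℤ)) - 2 * T.card - numComponents G T ≤ -2) :
    ¬ StrongParityProperty G := by
  classical
  intro hSPP
  set W : Set V := ((↑T : Set V)ᶜ) with hWdef
  -- the component of a vertex, as an option
  let cmp : V → Option (G.induce W).ConnectedComponent := fun v =>
    if h : v ∈ W then some ((G.induce W).connectedComponentMk ⟨v, h⟩) else none
  let fib : (G.induce W).ConnectedComponent → Finset V :=
    fun K => Tᶜ.filter (fun u => cmp u = some K)
  have hmemW : ∀ v : V, v ∈ W ↔ v ∉ T := by intro v; simp [hWdef]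
  have hfib_subset : ∀ K, fib K ⊆ Tᶜ := fun K => Finset.filter_subset _ _
  have hcmp_of : ∀ (v : V) (h : v ∈ W),
      cmp v = some ((G.induce W).connectedComponentMk ⟨v, h⟩) := by
    intro v h; simp [cmp, h]
  have hmem_fib : ∀ (v : V) (h : v ∈ W),
      v ∈ fib ((G.induce W).connectedComponentMk ⟨v, h⟩) := by
    intro v h
    simp only [fib, Finset.mem_filter, Finset.mem_compl]
    exact ⟨(hmemW v).mp h, hcmp_of v h⟩
  have hfib_nonempty : ∀ K, (fib K).Nonempty := by
    intro K
    obtain ⟨⟨v, hv⟩, hvK⟩ := Quot.exists_rep K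
    exact ⟨v, by subst hvK; exact hmem_fib v hv⟩
  -- fibers partition Tᶜ
  have hfibersum : ∀ g : V → ℕ, ∑ u ∈ Tᶜ, g u = ∑ K, ∑ u ∈ fib K, g u := by
    intro g
    have hmap : ∀ x ∈ Tᶜ, cmp x ∈ (Finset.univ.image some :
        Finset (Option (G.induce W).ConnectedComponent)) := by
      intro x hx
      have hxW : x ∈ W := (hmemW x).mpr (Finset.mem_compl.mp hx)
      rw [hcmp_of x hxW]
      exact Finset.mem_image_of_mem some (Finset.mem_univ _)
    rw [← Finset.sum_fiberwise_of_maps_to hmap g,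
      Finset.sum_image (fun a _ b _ h => Option.some_injective _ h)]
  -- the degree split
  have hdegsplit : ∀ (H : SimpleGraph V) (v : V),
      H.degree v = (H.neighborFinset v ∩ T).card + (H.neighborFinset v ∩ Tᶜ).card := by
    intro H v
    rw [SimpleGraph.degree, ← Finset.card_inter_add_card_sdiff (H.neighborFinset v) T,
      Finset.sdiff_eq_inter_compl]
  -- component closedness
  have hclosed : ∀ (u w : V) (K), u ∈ fib K → G.Adj u w → w ∉ T → w ∈ fib K := by
    intro u w K hu hadj hw
    obtain ⟨hu1, hu2⟩ := Finset.mem_filter.mp hu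
    have huW : u ∈ W := (hmemW u).mpr (Finset.mem_compl.mp hu1)
    have hwW : w ∈ W := (hmemW w).mpr hw
    have hadj' : (G.induce W).Adj ⟨u, huW⟩ ⟨w, hwW⟩ := by
      simp [SimpleGraph.comap_adj, hadj]
    have : (G.induce W).connectedComponentMk ⟨u, huW⟩
        = (G.induce W).connectedComponentMk ⟨w, hwW⟩ :=
      SimpleGraph.ConnectedComponent.connectedComponentMk_eq_of_adj hadj'
    have hcw : cmp w = some K := by
      rw [hcmp_of w hwW, ← this, ← hcmp_of u huW]; exact hu2
    exact Finset.mem_filter.mpr ⟨Finset.mem_compl.mpr hw, hcw⟩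
  -- b H K : number of edges of H between fib K and T
  set b : SimpleGraph V → (G.induce W).ConnectedComponent → ℕ :=
    fun H K => ∑ u ∈ fib K, (H.neighborFinset u ∩ T).card with hbdef
  -- choose X
  set P : Finset (G.induce W).ConnectedComponent :=
    Finset.univ.filter (fun K => Even (b G K)) with hPdef
  obtain ⟨P', hP'sub, hP'even, hP'exc⟩ :
      ∃ P' ⊆ P, Even P'.card ∧ (P \ P').card ≤ 1 := by
    by_cases hPc : Even P.card
    · exact ⟨P, Finset.Subset.refl P, hPc, by simp⟩
    · have hPne : P.Nonempty := by
        rw [Finset.nonempty_iff_ne_empty]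
        intro h; rw [h] at hPc; simp at hPc
      obtain ⟨K0, hK0⟩ := hPne
      refine ⟨P.erase K0, Finset.erase_subset _ _, ?_, ?_⟩
      · rw [Finset.card_erase_of_mem hK0]
        obtain ⟨k, hk⟩ := Nat.not_even_iff_odd.mp hPc
        exact ⟨k, by omega⟩
      · have : P \ P.erase K0 ⊆ {K0} := by
          intro x hx
          rw [Finset.mem_sdiff, Finset.mem_erase] at hx
          simp only [Finset.mem_singleton]
          tauto
        calc (P \ P.erase K0).card ≤ ({K0} : Finset _).card := Finset.card_le_card this
          _ = 1 := Finset.card_singleton K0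
  let r : (G.induce W).ConnectedComponent → V := fun K => (hfib_nonempty K).choose
  have hr_mem : ∀ K, r K ∈ fib K := fun K => (hfib_nonempty K).choose_spec
  have hr_cmp : ∀ K, cmp (r K) = some K :=
    fun K => (Finset.mem_filter.mp (hr_mem K)).2
  set X : Finset V := P'.image r with hXdef
  have hX_sub : ∀ v ∈ X, v ∉ T := by
    intro v hv
    obtain ⟨K, _, rfl⟩ := Finset.mem_image.mp hv
    exact Finset.mem_compl.mp (hfib_subset K (hr_mem K))
  have hXcard : X.card = P'.card := by
    rw [hXdef]
    apply Finset.card_image_of_injOn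
    intro a _ c _ hac
    have : some a = some c := by rw [← hr_cmp a, ← hr_cmp c, hac]
    exact Option.some_injective _ this
  have hXfib_mem : ∀ K ∈ P', fib K ∩ X = {r K} := by
    intro K hK
    ext v
    simp only [Finset.mem_inter, Finset.mem_singleton]
    constructor
    · rintro ⟨hv1, hv2⟩
      obtain ⟨K', hK', rfl⟩ := Finset.mem_image.mp hv2
      have : some K' = some K := by
        rw [← hr_cmp K', (Finset.mem_filter.mp hv1).2]
      rw [Option.some_injective _ this]
    · rintro rfl
      exact ⟨hr_mem K, Finset.mem_image_of_mem r hK⟩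
  have hXfib_not : ∀ K, K ∉ P' → fib K ∩ X = ∅ := by
    intro K hK
    rw [Finset.eq_empty_iff_forall_notMem]
    rintro v hv
    obtain ⟨hv1, hv2⟩ := Finset.mem_inter.mp hv
    obtain ⟨K', hK', rfl⟩ := Finset.mem_image.mp hv2
    have : some K' = some K := by
      rw [← hr_cmp K', (Finset.mem_filter.mp hv1).2]
    rw [Option.some_injective _ this] at hK'
    exact hK hK'
  -- get the factor
  obtain ⟨F, hFle, hF1, hFodd, hFeven⟩ := hSPP X (by rw [hXcard]; exact hP'even)
  have hnsub : ∀ v, F.neighborFinset v ⊆ G.neighborFinset v := by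
    intro v w hw
    rw [SimpleGraph.mem_neighborFinset] at hw ⊢
    exact hFle hw
  -- parity of b F K
  have hbF_parity : ∀ K, (Even (b F K) ↔ Even ((fib K ∩ X).card)) := by
    intro K
    have hfs : ∀ u ∈ fib K, F.neighborFinset u ∩ Tᶜ = F.neighborFinset u ∩ fib K := by
      intro u hu
      ext w
      simp only [Finset.mem_inter, Finset.mem_compl]
      constructor
      · rintro ⟨hw1, hw2⟩
        refine ⟨hw1, hclosed u w K hu (hFle ?_) hw2⟩
        rwa [SimpleGraph.mem_neighborFinset] at hw1
      · rintro ⟨hw1, hw2⟩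
        exact ⟨hw1, Finset.mem_compl.mp (hfib_subset K hw2)⟩
    have hdeq : ∑ u ∈ fib K, F.degree u
        = b F K + ∑ u ∈ fib K, (F.neighborFinset u ∩ fib K).card := by
      rw [hbdef, ← Finset.sum_add_distrib]
      apply Finset.sum_congr rfl
      intro u hu
      rw [hdegsplit F u, hfs u hu]
    have heven2 : Even (∑ u ∈ fib K, (F.neighborFinset u ∩ fib K).card) :=
      aux_even_sum_inter F (fib K)
    have hdeg_parity : Even (∑ u ∈ fib K, F.degree u) ↔ Even ((fib K ∩ X).card) := by
      rw [← Finset.sum_inter_add_sum_sdiff (fib K) X (fun u => F.degree u)]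
      have hev : Even (∑ u ∈ fib K \ X, F.degree u) :=
        Finset.even_sum _ (fun v hv => hFeven v (Finset.mem_sdiff.mp hv).2)
      rw [Nat.even_add, aux_even_sum_iff
        (fun v hv => hFodd v (Finset.mem_inter.mp hv).2)]
      tauto
    rw [← hdeg_parity, hdeq, Nat.even_add]
    tauto
  have hble : ∀ K, b F K ≤ b G K := by
    intro K
    apply Finset.sum_le_sum
    intro u _
    exact Finset.card_le_card (Finset.inter_subset_inter (hnsub u) Finset.Subset.rfl)
  -- strict slack away from the exceptional set
  have hstrict : ∀ K, K ∉ P \ P' → b F K + 1 ≤ b G K := by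
    intro K hK
    have hne : ¬ (Even (b F K) ↔ Even (b G K)) := by
      by_cases hKP' : K ∈ P'
      · have h1 : Even (b G K) := (Finset.mem_filter.mp (hP'sub hKP')).2
        have h2 : ¬ Even (b F K) := by
          rw [hbF_parity K, hXfib_mem K hKP']
          simp
        tauto
      · have hKP : K ∉ P := by
          intro h; exact hK (Finset.mem_sdiff.mpr ⟨h, hKP'⟩)
        have h1 : ¬ Even (b G K) := by
          intro h; exact hKP (Finset.mem_filter.mpr ⟨Finset.mem_univ K, h⟩)
        have h2 : Even (b F K) := by
          rw [hbF_parity K, hXfib_not K hKP']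
          simp
        tauto
    have : b F K ≠ b G K := fun h => hne (by rw [h])
    have := hble K
    omega
  -- sum the slack
  set c : ℕ := (Finset.univ : Finset (G.induce W).ConnectedComponent).card with hcdef
  have hslack : ∑ K, b F K + c ≤ ∑ K, b G K + 1 := by
    have h1 : ∑ K, (b F K + 1) ≤ ∑ K, (b G K + if K ∈ P \ P' then 1 else 0) := by
      apply Finset.sum_le_sum
      intro K _
      by_cases hK : K ∈ P \ P'
      · simp only [if_pos hK]
        exact Nat.add_le_add_right (hble K) 1
      · simp only [if_neg hK, Nat.add_zero]
        exact hstrict K hK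
    rw [Finset.sum_add_distrib, Finset.sum_add_distrib, Finset.sum_const,
      smul_eq_mul, mul_one] at h1
    have h2 : ∑ K, (if K ∈ P \ P' then 1 else 0) = (P \ P').card := by
      rw [Finset.sum_ite_mem, Finset.univ_inter, Finset.card_eq_sum_ones]
    rw [h2] at h1
    omega
  -- T side
  have hTdeg : ∀ v ∈ T, 2 ≤ F.degree v := by
    intro v hv
    have h1 := hF1 v
    have h2 := hFeven v (fun h => hX_sub v h hv)
    obtain ⟨k, hk⟩ := h2
    omega
  have h2T : 2 * T.card ≤ ∑ v ∈ T, F.degree v := by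
    calc 2 * T.card = ∑ _v ∈ T, 2 := by rw [Finset.sum_const, smul_eq_mul, mul_comm]
      _ ≤ ∑ v ∈ T, F.degree v := Finset.sum_le_sum hTdeg
  -- assemble
  have hAle : ∑ v ∈ T, (F.neighborFinset v ∩ T).card
      ≤ ∑ v ∈ T, (G.neighborFinset v ∩ T).card :=
    Finset.sum_le_sum (fun v _ =>
      Finset.card_le_card (Finset.inter_subset_inter (hnsub v) Finset.Subset.rfl))
  have hBG : ∑ v ∈ T, (G.neighborFinset v ∩ Tᶜ).card = ∑ K, b G K := by
    rw [aux_sum_inter_comm G T Tᶜ, hfibersum]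
  have hBF : ∑ v ∈ T, (F.neighborFinset v ∩ Tᶜ).card = ∑ K, b F K := by
    rw [aux_sum_inter_comm F T Tᶜ, hfibersum]
  have hSG : ∑ v ∈ T, G.degree v
      = ∑ v ∈ T, (G.neighborFinset v ∩ T).card + ∑ K, b G K := by
    rw [← hBG, ← Finset.sum_add_distrib]
    exact Finset.sum_congr rfl (fun v _ => hdegsplit G v)
  have hSF : ∑ v ∈ T, F.degree v
      = ∑ v ∈ T, (F.neighborFinset v ∩ T).card + ∑ K, b F K := by
    rw [← hBF, ← Finset.sum_add_distrib]
    exact Finset.sum_congr rfl (fun v _ => hdegsplit F v)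
  have hmain : 2 * T.card + c ≤ ∑ v ∈ T, G.degree v + 1 := by
    calc 2 * T.card + c ≤ (∑ v ∈ T, F.degree v) + c := by omega
      _ = ∑ v ∈ T, (F.neighborFinset v ∩ T).card + (∑ K, b F K + c) := by
          rw [hSF]; ring
      _ ≤ ∑ v ∈ T, (G.neighborFinset v ∩ T).card + (∑ K, b G K + 1) := by
          have := hslack
          omega
      _ = ∑ v ∈ T, G.degree v + 1 := by rw [hSG]; ring
  -- conclude
  have hc_eq : numComponents G T = c := by
    unfold numComponents
    rw [Nat.card_eq_fintype_card]
    rfl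
  rw [hc_eq] at hT
  have hcast : ((∑ v ∈ T, G.degree v : ℕ) : ℤ) = ∑ x ∈ T, (G.degree x : ℤ) := by
    push_cast; rfl
  have : (2 * T.card + c : ℤ) ≤ (∑ x ∈ T, (G.degree x : ℤ)) + 1 := by
    rw [← hcast]
    exact_mod_cast hmain
  omega
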